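/- Let T(A,α) ⊆ K[Rep(A,α)] be the subalgebra generated by {tr_α a : a ∈ A}. If d : A → A is a derivation with d(e_v) = 0 for all v, then the induced derivation d_α of K[Rep(A,α)] restricts to a derivation of T(A,α), and this restriction depends only on the induced map of d on A/[A,A]. -/
import Mathlib


open scoped Classical

/-- A (K-linear) derivation of a possibly noncommutative algebra. -/
def IsDerivation (K : Type*) {A : Type*} [CommRing K] [Ring A] [Algebra K A]
    (d : A →ₗ[K] A) : Prop :=
  ∀ a b : A, d (a * b) = a * d b + d a * b

/-- The K-submodule [A,A] spanned by commutators. -/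
def commSpan (K : Type*) (A : Type*) [CommRing K] [Ring A] [Algebra K A] : Submodule K A :=
  Submodule.span K {x : A | ∃ a b : A, x = a * b - b * a}

/-- The inner derivation x ↦ cx - xc. -/
def innerDer (K : Type*) {A : Type*} [CommRing K] [Ring A] [Algebra K A] (c : A) :
    A →ₗ[K] A :=
  LinearMap.mulLeft K c - LinearMap.mulRight K c

section Rep

variable (K : Type*) (A : Type*) [CommRing K] [Ring A] [Algebra K A]
variable (m : ℕ) (e : Fin m → A) (α : Fin m → ℕ)

/-- e_1, ..., e_m is a complete set of orthogonal idempotents. -/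
def CompleteOrthIdem : Prop :=
  (∀ v, e v * e v = e v) ∧ (∀ v w, v ≠ w → e v * e w = 0) ∧ (∑ v, e v = 1)

/-- n = Σ_v α_v. -/
def nn : ℕ := ∑ v, α v

/-- i lies in the v-th diagonal block. -/
def inBlock (v : Fin m) (i : Fin (nn m α)) : Prop :=
  (∑ w ∈ Finset.univ.filter (· < v), α w) ≤ i.val ∧
    i.val < ∑ w ∈ Finset.univ.filter (· ≤ v), α w

/-- The entries of the diagonal 0-1 matrix Δ^v. -/
noncomputable def delta (v : Fin m) (i j : Fin (nn m α)) : K :=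
  if i = j ∧ inBlock m α v i then 1 else 0

/-- The defining relations of the coordinate ring K[Rep(A,α)] among the
generators a_{ij}. -/
def repRels : Set (MvPolynomial (A × Fin (nn m α) × Fin (nn m α)) K) :=
  {P | (∃ (a b : A) (i j : Fin (nn m α)),
          P = MvPolynomial.X (a * b, i, j)
              - ∑ k, MvPolynomial.X (a, i, k) * MvPolynomial.X (b, k, j)) ∨
       (∃ (a b : A) (i j : Fin (nn m α)),
          P = MvPolynomial.X (a + b, i, j) - MvPolynomial.X (a, i, j) - MvPolynomial.X (b, i, j)) ∨
       (∃ (c : K) (a : A) (i j : Fin (nn m α)),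
          P = MvPolynomial.X (c • a, i, j) - MvPolynomial.C c * MvPolynomial.X (a, i, j)) ∨
       (∃ (v : Fin m) (i j : Fin (nn m α)),
          P = MvPolynomial.X (e v, i, j) - MvPolynomial.C (delta K m α v i j))}

/-- The coordinate ring K[Rep(A,α)] of the representation scheme. -/
abbrev RepRing := MvPolynomial (A × Fin (nn m α) × Fin (nn m α)) K ⧸
  Ideal.span (repRels K A m e α)

/-- The generator a_{ij} of K[Rep(A,α)]. -/
noncomputable def repGen (a : A) (i j : Fin (nn m α)) : RepRing K A m e α :=
  Ideal.Quotient.mk _ (MvPolynomial.X (a, i, j))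

/-- The trace function tr_α a = Σ_i a_{ii}. -/
noncomputable def trRep (a : A) : RepRing K A m e α :=
  ∑ i, repGen K A m e α a i i

/-- The trace algebra T(A,α), generated by the elements tr_α a. -/
noncomputable def traceAlg : Subalgebra K (RepRing K A m e α) :=
  Algebra.adjoin K (Set.range (trRep K A m e α))

end Rep

section Aux
variable (K : Type*) (A : Type*) [CommRing K] [Ring A] [Algebra K A]
variable (m : ℕ) (e : Fin m → A) (α : Fin m → ℕ)

lemma repGen_mul (a b : A) (i j : Fin (nn m α)) :
    repGen K A m e α (a * b) i j = ∑ k, repGen K A m e α a i k * repGen K A m e α b k j := by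
  have h : (MvPolynomial.X (a * b, i, j)
      - ∑ k, MvPolynomial.X (a, i, k) * MvPolynomial.X (b, k, j) :
        MvPolynomial (A × Fin (nn m α) × Fin (nn m α)) K)
      ∈ Ideal.span (repRels K A m e α) :=
    Ideal.subset_span (Or.inl ⟨a, b, i, j, rfl⟩)
  have h2 := (Ideal.Quotient.eq_zero_iff_mem).2 h
  rw [map_sub, sub_eq_zero, map_sum] at h2
  simpa [repGen] using h2

lemma repGen_add (a b : A) (i j : Fin (nn m α)) :
    repGen K A m e α (a + b) i j = repGen K A m e α a i j + repGen K A m e α b i j := by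
  have h : (MvPolynomial.X (a + b, i, j) - MvPolynomial.X (a, i, j) - MvPolynomial.X (b, i, j) :
        MvPolynomial (A × Fin (nn m α) × Fin (nn m α)) K)
      ∈ Ideal.span (repRels K A m e α) :=
    Ideal.subset_span (Or.inr (Or.inl ⟨a, b, i, j, rfl⟩))
  have h2 := (Ideal.Quotient.eq_zero_iff_mem).2 h
  rw [map_sub, map_sub, sub_sub, sub_eq_zero] at h2
  simpa [repGen] using h2

lemma repGen_smul (c : K) (a : A) (i j : Fin (nn m α)) :
    repGen K A m e α (c • a) i j = c • repGen K A m e α a i j := by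
  have h : (MvPolynomial.X (c • a, i, j) - MvPolynomial.C c * MvPolynomial.X (a, i, j) :
        MvPolynomial (A × Fin (nn m α) × Fin (nn m α)) K)
      ∈ Ideal.span (repRels K A m e α) :=
    Ideal.subset_span (Or.inr (Or.inr (Or.inl ⟨c, a, i, j, rfl⟩)))
  have h2 := (Ideal.Quotient.eq_zero_iff_mem).2 h
  rw [map_sub, sub_eq_zero] at h2
  have h3 : Ideal.Quotient.mkₐ K (Ideal.span (repRels K A m e α)) (MvPolynomial.X (c • a, i, j))
      = Ideal.Quotient.mkₐ K (Ideal.span (repRels K A m e α)) (c • MvPolynomial.X (a, i, j)) := by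
    simpa [MvPolynomial.smul_eq_C_mul, Ideal.Quotient.mkₐ_eq_mk] using h2
  rw [map_smul] at h3
  simpa [repGen, Ideal.Quotient.mkₐ_eq_mk] using h3

lemma trRep_add (a b : A) :
    trRep K A m e α (a + b) = trRep K A m e α a + trRep K A m e α b := by
  simp [trRep, repGen_add, Finset.sum_add_distrib]

lemma trRep_smul (c : K) (a : A) :
    trRep K A m e α (c • a) = c • trRep K A m e α a := by
  simp [trRep, repGen_smul, Finset.smul_sum]

lemma trRep_comm (a b : A) :
    trRep K A m e α (a * b) = trRep K A m e α (b * a) := by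
  simp only [trRep, repGen_mul]
  rw [Finset.sum_comm]
  exact Finset.sum_congr rfl fun i _ => Finset.sum_congr rfl fun k _ => mul_comm _ _

lemma trRep_zero_of_commSpan {x : A} (hx : x ∈ commSpan K A) :
    trRep K A m e α x = 0 := by
  induction hx using Submodule.span_induction with
  | mem y hy =>
    obtain ⟨a, b, rfl⟩ := hy
    have h1 : trRep K A m e α (a * b - b * a) + trRep K A m e α (b * a)
        = trRep K A m e α (a * b) := by
      rw [← trRep_add, sub_add_cancel]
    rw [trRep_comm K A m e α a b] at h1
    exact add_right_cancel (h1.trans (zero_add _).symm)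
  | zero =>
    have := trRep_smul K A m e α 0 0
    simpa using this
  | add y z _ _ hy hz => rw [trRep_add, hy, hz, add_zero]
  | smul c y _ hy => rw [trRep_smul, hy, smul_zero]

end Aux

/-- The induced derivation d_α restricts to a derivation of the trace algebra
T(A,α), and this restriction only depends on the map induced by d on A/[A,A]. -/
theorem induced_derivation_restricts_to_trace_algebra
    (K : Type*) (A : Type*) [CommRing K] [Ring A] [Algebra K A]
    (m : ℕ) (e : Fin m → A) (α : Fin m → ℕ)
    (he : CompleteOrthIdem A m e)
    (d : A →ₗ[K] A) (hd : IsDerivation K d) (hde : ∀ v, d (e v) = 0)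
    (D : RepRing K A m e α →ₗ[K] RepRing K A m e α)
    (hD : IsDerivation K D)
    (hDgen : ∀ (a : A) (i j : Fin (nn m α)),
      D (repGen K A m e α a i j) = repGen K A m e α (d a) i j) :
    (∀ f ∈ traceAlg K A m e α, D f ∈ traceAlg K A m e α) ∧
    (∀ (d' : A →ₗ[K] A), IsDerivation K d' → (∀ v, d' (e v) = 0) →
      ∀ (D' : RepRing K A m e α →ₗ[K] RepRing K A m e α), IsDerivation K D' →
        (∀ (a : A) (i j : Fin (nn m α)),
          D' (repGen K A m e α a i j) = repGen K A m e α (d' a) i j) →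
        (∀ a : A, d a - d' a ∈ commSpan K A) →
        ∀ f ∈ traceAlg K A m e α, D f = D' f) := by
  constructor
  · intro f hf
    induction hf using Algebra.adjoin_induction with
    | mem x hx =>
      obtain ⟨a, rfl⟩ := hx
      have : D (trRep K A m e α a) = trRep K A m e α (d a) := by
        simp [trRep, map_sum, hDgen]
      rw [this]
      exact Algebra.subset_adjoin ⟨d a, rfl⟩
    | algebraMap c =>
      have h1 : D 1 = 0 := by
        have h := hD 1 1
        rw [one_mul, one_mul, mul_one] at h
        exact (left_eq_add.mp h)
      have : D (algebraMap K _ c) = 0 := by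
        rw [Algebra.algebraMap_eq_smul_one, map_smul, h1, smul_zero]
      rw [this]; exact Subalgebra.zero_mem _
    | add x y _ _ hx hy => rw [map_add]; exact Subalgebra.add_mem _ hx hy
    | mul x y hx' hy' hx hy =>
      rw [hD x y]
      exact Subalgebra.add_mem _ (Subalgebra.mul_mem _ hx' hy)
        (Subalgebra.mul_mem _ hx hy')
  · intro d' hd' hd'e D' hD' hD'gen hcomm f hf
    induction hf using Algebra.adjoin_induction with
    | mem x hx =>
      obtain ⟨a, rfl⟩ := hx
      have h1 : D (trRep K A m e α a) = trRep K A m e α (d a) := by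
        simp [trRep, map_sum, hDgen]
      have h2 : D' (trRep K A m e α a) = trRep K A m e α (d' a) := by
        simp [trRep, map_sum, hD'gen]
      rw [h1, h2]
      have h3 : trRep K A m e α (d a - d' a) = 0 :=
        trRep_zero_of_commSpan K A m e α (hcomm a)
      have h4 : trRep K A m e α (d a - d' a) + trRep K A m e α (d' a)
          = trRep K A m e α (d a) := by
        rw [← trRep_add, sub_add_cancel]
      rw [h3, zero_add] at h4
      exact h4.symm
    | algebraMap c =>
      have h1 : D 1 = 0 := by
        have h := hD 1 1
        rw [one_mul, one_mul, mul_one] at h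
        exact (left_eq_add.mp h)
      have h1' : D' 1 = 0 := by
        have h := hD' 1 1
        rw [one_mul, one_mul, mul_one] at h
        exact (left_eq_add.mp h)
      rw [Algebra.algebraMap_eq_smul_one, map_smul, map_smul, h1, h1']
    | add x y _ _ hx hy => rw [map_add, map_add, hx, hy]
    | mul x y _ _ hx hy => rw [hD x y, hD' x y, hx, hy]
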